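/- For n ≥ 3, G_1(n) = G_1(n-2) + G_1(n-1) + 2(n-1)·G_1(n-1), where G_1(m) counts partitions of labeled sets into m blocks of size at most 2 summed over the ground-set size. -/

import Mathlib

/-- `E σ n k` is the number of partitions of `{1,…,k}` into exactly `n` blocks,
each of size between `1` and `σ+1`. -/
noncomputable def E (σ n k : ℕ) : ℕ :=
  Nat.card {P : Finpartition (Finset.univ : Finset (Fin k)) //
    P.parts.card = n ∧ ∀ b ∈ P.parts, b.card ≤ σ + 1}

/-- `G₁ m = Σ_{k=m}^{2m} E₁(m,k)`. -/
noncomputable def G1 (m : ℕ) : ℕ := ∑ k ∈ Finset.Icc m (2 * m), E 1 m k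

open Finset

lemma E00 : E 1 0 0 = 1 := by
  rw [E, Nat.card_eq_fintype_card]
  decide

lemma E11 : E 1 1 1 = 1 := by
  rw [E, Nat.card_eq_fintype_card]
  decide

lemma E12 : E 1 1 2 = 1 := by
  rw [E, Nat.card_eq_fintype_card]
  decide

lemma E_bounds {n k : ℕ} (P : Finpartition (Finset.univ : Finset (Fin k)))
    (h1 : P.parts.card = n) (h2 : ∀ b ∈ P.parts, b.card ≤ 2) : n ≤ k ∧ k ≤ 2 * n := by
  have hsum : ∑ b ∈ P.parts, b.card = k := by
    rw [P.sum_card_parts]; simp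
  constructor
  · calc n = ∑ _b ∈ P.parts, 1 := by simp [h1]
      _ ≤ ∑ b ∈ P.parts, b.card := Finset.sum_le_sum (fun b hb => Nat.one_le_iff_ne_zero.2
          (by simpa [Finset.card_eq_zero] using P.ne_bot hb))
      _ = k := hsum
  · calc k = ∑ b ∈ P.parts, b.card := hsum.symm
      _ ≤ ∑ _b ∈ P.parts, 2 := Finset.sum_le_sum h2
      _ = 2 * n := by simp [h1, Nat.mul_comm]

lemma E_eq_zero_of_lt {n k : ℕ} (h : k < n) : E 1 n k = 0 := by
  rw [E, Nat.card_eq_zero]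
  left
  rw [isEmpty_subtype]
  rintro P ⟨h1, h2⟩
  exact absurd (E_bounds P h1 h2).1 (by omega)

lemma E_eq_zero_of_gt {n k : ℕ} (h : 2 * n < k) : E 1 n k = 0 := by
  rw [E, Nat.card_eq_zero]
  left
  rw [isEmpty_subtype]
  rintro P ⟨h1, h2⟩
  exact absurd (E_bounds P h1 h2).2 (by omega)


section Maps
variable {γ δ : Type*} [DecidableEq γ] [DecidableEq δ]

/-- Map a finpartition along an embedding. -/
def fpMap {s : Finset γ} (f : γ ↪ δ) (P : Finpartition s) :
    Finpartition (s.map f) where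
  parts := P.parts.map (Finset.mapEmbedding f).toEmbedding
  supIndep := by
    rw [Finset.supIndep_iff_pairwiseDisjoint]
    rintro x hx y hy hxy
    simp only [Finset.coe_map, Set.mem_image, Finset.mem_coe] at hx hy
    obtain ⟨a, ha, rfl⟩ := hx
    obtain ⟨c, hc, rfl⟩ := hy
    have hac : a ≠ c := fun h => hxy (by rw [h])
    have := P.disjoint ha hc hac
    simp only [Function.onFun, id_eq, RelEmbedding.coe_toEmbedding, Finset.mapEmbedding_apply,
      Finset.disjoint_map]
    exact this
  sup_parts := by
    ext x
    simp only [Finset.mem_sup, Finset.mem_map, Finset.mapEmbedding_apply, id_eq]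
    constructor
    · rintro ⟨v, ⟨c, hc, rfl⟩, hx⟩
      obtain ⟨a, ha, rfl⟩ := Finset.mem_map.1 hx
      exact ⟨a, by rw [← P.sup_parts]; exact Finset.mem_sup.2 ⟨c, hc, ha⟩, rfl⟩
    · rintro ⟨a, ha, rfl⟩
      rw [← P.sup_parts] at ha
      obtain ⟨c, hc, hac⟩ := Finset.mem_sup.1 ha
      exact ⟨c.map f, ⟨c, hc, rfl⟩, Finset.mem_map_of_mem f hac⟩
  bot_notMem := by
    simp only [Finset.bot_eq_empty, Finset.mem_map, Finset.mapEmbedding_apply]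
    rintro ⟨c, hc, hce⟩
    exact P.bot_notMem (by rwa [Finset.map_eq_empty.1 hce] at hc)

@[simp] lemma fpMap_parts {s : Finset γ} (f : γ ↪ δ) (P : Finpartition s) :
    (fpMap f P).parts = P.parts.map (Finset.mapEmbedding f).toEmbedding := rfl

/-- Restrict a finpartition to a subtype containing the ground set. -/
def fpSubtype (p : γ → Prop) [DecidablePred p] {s : Finset γ}
    (P : Finpartition s) (hs : ∀ x ∈ s, p x) :
    Finpartition (s.subtype p) where
  parts := P.parts.image (Finset.subtype p)
  supIndep := by
    rw [Finset.supIndep_iff_pairwiseDisjoint]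
    rintro x hx y hy hxy
    simp only [Finset.coe_image, Set.mem_image, Finset.mem_coe] at hx hy
    obtain ⟨a, ha, rfl⟩ := hx
    obtain ⟨c, hc, rfl⟩ := hy
    have hac : a ≠ c := fun h => hxy (by rw [h])
    have := P.disjoint ha hc hac
    simp only [Function.onFun, id_eq, Finset.disjoint_left] at this ⊢
    intro z hz hz'
    exact this (Finset.mem_subtype.1 hz) (Finset.mem_subtype.1 hz')
  sup_parts := by
    ext x
    simp only [Finset.mem_sup, Finset.mem_image, id_eq, Finset.mem_subtype]
    constructor
    · rintro ⟨v, ⟨c, hc, rfl⟩, hx⟩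
      rw [← P.sup_parts]
      exact Finset.mem_sup.2 ⟨c, hc, Finset.mem_subtype.1 hx⟩
    · intro hx
      rw [← P.sup_parts] at hx
      obtain ⟨c, hc, hxc⟩ := Finset.mem_sup.1 hx
      exact ⟨c.subtype p, ⟨c, hc, rfl⟩, Finset.mem_subtype.2 hxc⟩
  bot_notMem := by
    simp only [Finset.bot_eq_empty, Finset.mem_image]
    rintro ⟨c, hc, hce⟩
    obtain ⟨x, hx⟩ := P.nonempty_of_mem_parts hc
    have hpx : p x := hs x (P.le hc hx)
    have : (⟨x, hpx⟩ : {y // p y}) ∈ c.subtype p := Finset.mem_subtype.2 hx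
    rw [hce] at this
    exact absurd this (Finset.notMem_empty _)

@[simp] lemma fpSubtype_parts (p : γ → Prop) [DecidablePred p] {s : Finset γ}
    (P : Finpartition s) (hs : ∀ x ∈ s, p x) :
    (fpSubtype p P hs).parts = P.parts.image (Finset.subtype p) := rfl

end Maps

section Congr
variable {γ δ : Type*} [DecidableEq γ] [DecidableEq δ]
variable [Fintype γ] [Fintype δ]

/-- Transfer a finpartition of `univ` along an equiv. -/
noncomputable def fpCongr (e : γ ≃ δ) (P : Finpartition (univ : Finset γ)) :
    Finpartition (univ : Finset δ) :=
  (fpMap e.toEmbedding P).copy (Finset.map_univ_equiv e)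

@[simp] lemma fpCongr_parts (e : γ ≃ δ) (P : Finpartition (univ : Finset γ)) :
    (fpCongr e P).parts = P.parts.map (Finset.mapEmbedding e.toEmbedding).toEmbedding := by
  simp [fpCongr]

lemma fpCongr_symm_apply (e : γ ≃ δ) (P : Finpartition (univ : Finset γ)) :
    fpCongr e.symm (fpCongr e P) = P := by
  ext c
  simp only [fpCongr_parts, Finset.mem_map, RelEmbedding.coe_toEmbedding,
    Finset.mapEmbedding_apply]
  constructor
  · rintro ⟨v, ⟨d, hd, rfl⟩, rfl⟩
    simpa [Finset.map_map] using hd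
  · intro hc
    exact ⟨c.map e.toEmbedding, ⟨c, hc, rfl⟩, by simp [Finset.map_map]⟩

lemma fpCongr_cond (e : γ ≃ δ) (n : ℕ) (P : Finpartition (univ : Finset γ))
    (h : P.parts.card = n ∧ ∀ b ∈ P.parts, b.card ≤ 2) :
      (fpCongr e P).parts.card = n ∧ ∀ b ∈ (fpCongr e P).parts, b.card ≤ 2 := by
  obtain ⟨h1, h2⟩ := h
  refine ⟨by simp [h1], ?_⟩
  simp only [fpCongr_parts, Finset.mem_map, RelEmbedding.coe_toEmbedding,
    Finset.mapEmbedding_apply]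
  rintro b ⟨c, hc, rfl⟩
  simpa using h2 c hc

lemma card_fpCongr (e : γ ≃ δ) (n : ℕ) :
    Nat.card {P : Finpartition (univ : Finset γ) //
      P.parts.card = n ∧ ∀ b ∈ P.parts, b.card ≤ 2} =
    Nat.card {P : Finpartition (univ : Finset δ) //
      P.parts.card = n ∧ ∀ b ∈ P.parts, b.card ≤ 2} := by
  exact Nat.card_congr
    { toFun := fun P => ⟨fpCongr e P.1, fpCongr_cond e n P.1 P.2⟩
      invFun := fun P => ⟨fpCongr e.symm P.1, fpCongr_cond e.symm n P.1 P.2⟩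
      left_inv := fun P => Subtype.ext (fpCongr_symm_apply e P.1)
      right_inv := fun P => Subtype.ext (by
        have := fpCongr_symm_apply e.symm P.1
        simpa using this) }
end Congr

section L
variable {γ : Type*} [DecidableEq γ] [Fintype γ] (b : Finset γ)

lemma ground_eq : (univ : Finset {x : γ // x ∉ b}).map (Function.Embedding.subtype _) = bᶜ := by
  ext x
  simp [Function.Embedding.subtype]
  exact ⟨fun ⟨a, h, e⟩ => by subst e; exact h, fun h => ⟨x, h, rfl⟩⟩

variable {b}

lemma avoid_parts_of_mem {P : Finpartition (univ : Finset γ)} (hbP : b ∈ P.parts) :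
    (P.avoid b).parts = P.parts.erase b := by
  ext c
  rw [Finpartition.mem_avoid, Finset.mem_erase]
  constructor
  · rintro ⟨d, hd, hdb, rfl⟩
    have hne : d ≠ b := fun h => hdb (h ▸ le_refl b)
    have hdisj : Disjoint d b := P.disjoint hd hbP hne
    rw [Finset.sdiff_eq_self_of_disjoint hdisj]
    exact ⟨hne, hd⟩
  · rintro ⟨hne, hc⟩
    have hdisj : Disjoint c b := P.disjoint hc hbP hne
    refine ⟨c, hc, fun hle => ?_, Finset.sdiff_eq_self_of_disjoint hdisj⟩
    exact P.bot_notMem (by rwa [(hdisj.eq_bot_of_le hle : c = ⊥)] at hc)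

noncomputable def fpUp (hb : b.Nonempty) (Q : Finpartition (univ : Finset {x : γ // x ∉ b})) :
    Finpartition (univ : Finset γ) :=
  (fpMap (Function.Embedding.subtype _) Q).extend
    (by simpa [Finset.bot_eq_empty, ← Finset.nonempty_iff_ne_empty] using hb)
    (by rw [ground_eq]; exact disjoint_compl_left)
    (by rw [ground_eq]; simp)

lemma fpUp_parts (hb : b.Nonempty) (Q : Finpartition (univ : Finset {x : γ // x ∉ b})) :
    (fpUp hb Q).parts =
      insert b (Q.parts.map (Finset.mapEmbedding (Function.Embedding.subtype _)).toEmbedding) := by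
  simp [fpUp, Finpartition.extend]

lemma not_mem_mapped (hb : b.Nonempty) (Q : Finpartition (univ : Finset {x : γ // x ∉ b})) :
    b ∉ Q.parts.map (Finset.mapEmbedding (Function.Embedding.subtype _)).toEmbedding := by
  rw [Finset.mem_map]
  rintro ⟨c, hc, hcb⟩
  obtain ⟨x, hx⟩ := hb
  rw [RelEmbedding.coe_toEmbedding, Finset.mapEmbedding_apply] at hcb
  have := hcb ▸ hx
  obtain ⟨y, _, rfl⟩ := Finset.mem_map.1 this
  exact y.2 hx
lemma fpUp_cond (hb : b.Nonempty) (hb2 : b.card ≤ 2) (n : ℕ)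
    (Q : Finpartition (univ : Finset {x : γ // x ∉ b}))
    (h : Q.parts.card = n ∧ ∀ c ∈ Q.parts, c.card ≤ 2) :
    ((fpUp hb Q).parts.card = n + 1 ∧ ∀ c ∈ (fpUp hb Q).parts, c.card ≤ 2) ∧
      b ∈ (fpUp hb Q).parts := by
  obtain ⟨h1, h2⟩ := h
  rw [fpUp_parts]
  refine ⟨⟨?_, ?_⟩, Finset.mem_insert_self _ _⟩
  · rw [Finset.card_insert_of_notMem (not_mem_mapped hb Q), Finset.card_map, h1]
  · intro c hc
    rcases Finset.mem_insert.1 hc with rfl | hc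
    · exact hb2
    · obtain ⟨d, hd, rfl⟩ := Finset.mem_map.1 hc
      rw [RelEmbedding.coe_toEmbedding, Finset.mapEmbedding_apply, Finset.card_map]
      exact h2 d hd

lemma fpUp_injective (hb : b.Nonempty) : Function.Injective (fpUp hb) := by
  intro Q Q' h
  have hparts : (fpUp hb Q).parts = (fpUp hb Q').parts := by rw [h]
  rw [fpUp_parts, fpUp_parts] at hparts
  have h2 := congrArg (Finset.erase · b) hparts
  simp only [Finset.erase_insert (not_mem_mapped hb Q),
    Finset.erase_insert (not_mem_mapped hb Q')] at h2
  have := Finset.map_injective _ h2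
  ext c
  rw [this]

lemma fpUp_surjective (hb : b.Nonempty) (P : Finpartition (univ : Finset γ))
    (hbP : b ∈ P.parts) : ∃ Q, fpUp hb Q = P := by
  have hgr : ((univ : Finset γ) \ b).subtype (· ∉ b) = univ := by
    ext x
    simp [x.2]
  refine ⟨(fpSubtype (· ∉ b) (P.avoid b) (by simp)).copy hgr, ?_⟩
  ext c
  rw [fpUp_parts]
  simp only [Finpartition.copy_parts, fpSubtype_parts, avoid_parts_of_mem hbP]
  rw [Finset.map_eq_image, Finset.image_image]
  have himg : ∀ d ∈ P.parts.erase b,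
      ((⇑(Finset.mapEmbedding (Function.Embedding.subtype fun x => x ∉ b)).toEmbedding) ∘
        Finset.subtype (fun x => x ∉ b)) d = d := by
    intro d hd
    have hdisj : Disjoint d b := P.disjoint (Finset.mem_of_mem_erase hd) hbP
      (Finset.ne_of_mem_erase hd)
    simp only [Function.comp_apply, RelEmbedding.coe_toEmbedding, Finset.mapEmbedding_apply,
      Finset.subtype_map]
    rw [Finset.filter_true_of_mem]
    intro x hx
    exact Finset.disjoint_left.1 hdisj hx
  rw [Finset.image_congr (fun d hd => himg d hd)]
  simp only [Finset.image_id']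
  rw [Finset.insert_erase hbP]

lemma card_with_part (hb : b.Nonempty) (hb2 : b.card ≤ 2) (n : ℕ) :
    Nat.card {P : Finpartition (univ : Finset γ) //
      (P.parts.card = n + 1 ∧ ∀ c ∈ P.parts, c.card ≤ 2) ∧ b ∈ P.parts} =
    Nat.card {Q : Finpartition (univ : Finset {x : γ // x ∉ b}) //
      Q.parts.card = n ∧ ∀ c ∈ Q.parts, c.card ≤ 2} := by
  symm
  apply Nat.card_eq_of_bijective
    (f := fun Q => ⟨fpUp hb Q.1, fpUp_cond hb hb2 n Q.1 Q.2⟩)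
  constructor
  · intro Q Q' h
    exact Subtype.ext (fpUp_injective hb (congrArg Subtype.val h))
  · rintro ⟨P, ⟨⟨h1, h2⟩, hbP⟩⟩
    obtain ⟨Q, hQ⟩ := fpUp_surjective hb P hbP
    have hcond : Q.parts.card = n ∧ ∀ c ∈ Q.parts, c.card ≤ 2 := by
      have hc := fpUp_parts hb Q
      rw [hQ] at hc
      constructor
      · have : P.parts.card = Q.parts.card + 1 := by
          rw [hc, Finset.card_insert_of_notMem (not_mem_mapped hb Q), Finset.card_map]
        omega
      · intro c hcQ
        have : c.map (Function.Embedding.subtype _) ∈ P.parts := by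
          rw [hc]
          exact Finset.mem_insert_of_mem (Finset.mem_map.2 ⟨c, hcQ, by
            rw [RelEmbedding.coe_toEmbedding, Finset.mapEmbedding_apply]⟩)
        simpa using h2 _ this
    exact ⟨⟨Q, hcond⟩, Subtype.ext hQ⟩


lemma card_with_part_E (hb : b.Nonempty) (hb2 : b.card ≤ 2) (n : ℕ) :
    Nat.card {P : Finpartition (univ : Finset γ) //
      (P.parts.card = n + 1 ∧ ∀ c ∈ P.parts, c.card ≤ 2) ∧ b ∈ P.parts} =
    E 1 n (Fintype.card γ - b.card) := by
  rw [card_with_part hb hb2 n]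
  have hcard : Fintype.card {x : γ // x ∉ b} = Fintype.card γ - b.card := by
    rw [Fintype.card_subtype_compl, Fintype.card_coe]
  exact card_fpCongr (Fintype.equivFinOfCardEq hcard) n


end L

lemma E_rec (n k : ℕ) : E 1 (n + 1) (k + 2) = E 1 n (k + 1) + (k + 1) * E 1 n k := by
  classical
  set t : Fin (k + 2) := Fin.last (k + 1) with ht
  set S := {P : Finpartition (univ : Finset (Fin (k + 2))) //
    P.parts.card = n + 1 ∧ ∀ c ∈ P.parts, c.card ≤ 2} with hS
  set C : Finset (Finset (Fin (k + 2))) :=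
    insert {t} ((univ.erase t).image (fun x => ({x, t} : Finset (Fin (k + 2))))) with hC
  -- the fiber counts
  have fiber_eq : ∀ b : Finset (Fin (k + 2)), t ∈ b → b.card ≤ 2 →
      (univ.filter (fun P : S => P.1.part t = b)).card = E 1 n (k + 2 - b.card) := by
    intro b htb hb2
    have hbne : b.Nonempty := ⟨t, htb⟩
    have hE := card_with_part_E hbne hb2 n
    rw [Fintype.card_fin] at hE
    rw [← Fintype.card_subtype, ← Nat.card_eq_fintype_card, ← hE]
    apply Nat.card_congr
    exact
      { toFun := fun x => ⟨x.1.1, x.1.2, by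
          have := x.1.1.part_mem.2 (mem_univ t)
          rwa [x.2] at this⟩
        invFun := fun P => ⟨⟨P.1, P.2.1⟩, P.1.part_eq_of_mem P.2.2 htb⟩
        left_inv := fun x => Subtype.ext (Subtype.ext rfl)
        right_inv := fun P => Subtype.ext rfl }
  -- every part containing t is in C
  have hg : ∀ P : S, P.1.part t ∈ C := by
    rintro ⟨P, h1, h2⟩
    have hmem : P.part t ∈ P.parts := P.part_mem.2 (mem_univ t)
    have htp : t ∈ P.part t := P.mem_part (mem_univ t)
    have hcard : (P.part t).card ≤ 2 := h2 _ hmem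
    have hpos : 0 < (P.part t).card := Finset.card_pos.2 ⟨t, htp⟩
    interval_cases hc : (P.part t).card
    · obtain ⟨a, ha⟩ := Finset.card_eq_one.1 hc
      rw [ha] at htp ⊢
      rw [← Finset.mem_singleton.1 htp]
      exact Finset.mem_insert_self _ _
    · obtain ⟨a, c, hac, hrw⟩ := Finset.card_eq_two.1 hc
      rw [hrw] at htp ⊢
      rcases Finset.mem_insert.1 htp with rfl | hc2
      · refine Finset.mem_insert_of_mem (Finset.mem_image.2 ⟨c, ?_, ?_⟩)
        · exact Finset.mem_erase.2 ⟨fun h => hac h.symm, mem_univ c⟩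
        · rw [Finset.pair_comm]
      · rw [← Finset.mem_singleton.1 hc2]
        refine Finset.mem_insert_of_mem (Finset.mem_image.2 ⟨a, ?_, rfl⟩)
        · exact Finset.mem_erase.2 ⟨fun h => hac (h.trans (Finset.mem_singleton.1 hc2)),
            mem_univ a⟩
  have hcardS : E 1 (n + 1) (k + 2) = Fintype.card S := by
    rw [E, Nat.card_eq_fintype_card]
  rw [hcardS, ← Finset.card_univ,
    Finset.card_eq_sum_card_fiberwise (f := fun P : S => P.1.part t) (t := C)
      (fun P _ => hg P)]
  -- singleton not in image
  have hsing : ({t} : Finset (Fin (k + 2))) ∉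
      (univ.erase t).image (fun x => ({x, t} : Finset (Fin (k + 2)))) := by
    rw [Finset.mem_image]
    rintro ⟨x, hx, hxe⟩
    have hxt : x ≠ t := (Finset.mem_erase.1 hx).1
    have : x ∈ ({t} : Finset (Fin (k + 2))) := hxe ▸ Finset.mem_insert_self x {t}
    exact hxt (Finset.mem_singleton.1 this)
  rw [hC, Finset.sum_insert hsing]
  have h1 : (univ.filter (fun P : S => P.1.part t = {t})).card = E 1 n (k + 1) := by
    rw [fiber_eq {t} (Finset.mem_singleton_self t) (by simp)]
    simp
  rw [h1]
  have h2 : ∑ b ∈ (univ.erase t).image (fun x => ({x, t} : Finset (Fin (k + 2)))),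
      (univ.filter (fun P : S => P.1.part t = b)).card = (k + 1) * E 1 n k := by
    rw [Finset.sum_image]
    · have : ∀ x ∈ univ.erase t,
          (univ.filter (fun P : S => P.1.part t = {x, t})).card = E 1 n k := by
        intro x hx
        have hxt : x ≠ t := (Finset.mem_erase.1 hx).1
        rw [fiber_eq {x, t} (Finset.mem_insert_of_mem (Finset.mem_singleton_self t))
          (le_of_eq (Finset.card_pair hxt))]
        rw [Finset.card_pair hxt]
        norm_num
      rw [Finset.sum_congr rfl this, Finset.sum_const, Finset.card_erase_of_mem (mem_univ t),
        Finset.card_univ, Fintype.card_fin]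
      simp [Nat.mul_comm]
    · intro x hx y hy hxy
      have hxt : x ≠ t := (Finset.mem_erase.1 hx).1
      have : x ∈ ({y, t} : Finset (Fin (k + 2))) :=
        (show ({x, t} : Finset (Fin (k + 2))) = {y, t} from hxy) ▸ Finset.mem_insert_self x {t}
      rcases Finset.mem_insert.1 this with h | h
      · exact h
      · exact absurd (Finset.mem_singleton.1 h) hxt
  rw [h2]

lemma E_sing (m k : ℕ) :
    2 * (m + 1) * E 1 (m + 1) (k + 1) =
      (k + 1) * E 1 (m + 1) (k + 1) + (k + 1) * E 1 m k := by
  induction k using Nat.strong_induction_on generalizing m with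
  | _ k ih =>
    match k, m with
    | 0, 0 => simp [E11, E00]
    | 0, m + 1 =>
      rw [E_eq_zero_of_lt (by omega), E_eq_zero_of_lt (by omega)]
      ring
    | 1, 0 => simp [E12, E_eq_zero_of_gt (show 2 * 0 < 1 by omega)]
    | 1, 1 =>
      have h22 : E 1 2 2 = 1 := by
        rw [show (2:ℕ) = 0 + 2 from rfl, E_rec, E11,
          E_eq_zero_of_lt (show 0 < 1 by omega)]
      rw [h22, E11]
    | 1, m + 2 =>
      rw [E_eq_zero_of_lt (by omega), E_eq_zero_of_lt (by omega)]
      ring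
    | k + 2, 0 =>
      rw [E_eq_zero_of_gt (by omega), E_eq_zero_of_gt (by omega)]
      ring
    | k + 2, m + 1 =>
      have ih1 := ih (k + 1) (by omega) m
      have ih2 := ih k (by omega) m
      have hrec1 : E 1 (m + 2) (k + 3) =
          E 1 (m + 1) (k + 2) + (k + 2) * E 1 (m + 1) (k + 1) := E_rec (m + 1) (k + 1)
      have hrec2 : E 1 (m + 1) (k + 2) = E 1 m (k + 1) + (k + 1) * E 1 m k := E_rec m k
      zify at ih1 ih2 hrec1 hrec2 ⊢
      linear_combination (2 * (m : ℤ) - (k : ℤ) + 1) * hrec1 + ih1 + ((k : ℤ) + 2) * ih2 -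
        ((k : ℤ) + 2) * hrec2

lemma G1_eq_range (m N : ℕ) (h : 2 * m < N) : G1 m = ∑ k ∈ Finset.range N, E 1 m k := by
  rw [G1]
  apply Finset.sum_subset
  · intro k hk
    rw [Finset.mem_Icc] at hk
    rw [Finset.mem_range]
    omega
  · intro k hk hk2
    rw [Finset.mem_Icc] at hk2
    rcases (by omega : k < m ∨ 2 * m < k) with h | h
    · exact E_eq_zero_of_lt h
    · exact E_eq_zero_of_gt h

noncomputable def S1 (m : ℕ) : ℕ := ∑ k ∈ Finset.range (2 * m + 1), (k + 1) * E 1 m k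

lemma R1 (m : ℕ) : G1 (m + 2) = G1 (m + 1) + S1 (m + 1) := by
  rw [G1_eq_range (m + 2) (2 * m + 5) (by omega)]
  rw [show 2 * m + 5 = (2 * m + 3) + 1 + 1 from rfl, Finset.sum_range_succ',
    Finset.sum_range_succ']
  rw [E_eq_zero_of_lt (show 0 < m + 2 by omega), E_eq_zero_of_lt (show 0 + 1 < m + 2 by omega)]
  have hterm : ∀ k, E 1 (m + 2) (k + 1 + 1) = E 1 (m + 1) (k + 1) + (k + 1) * E 1 (m + 1) k :=
    fun k => E_rec (m + 1) k
  rw [Finset.sum_congr rfl (fun k _ => hterm k), Finset.sum_add_distrib]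
  have hG : G1 (m + 1) = ∑ k ∈ Finset.range (2 * m + 3), E 1 (m + 1) (k + 1) := by
    rw [G1_eq_range (m + 1) (2 * m + 4) (by omega),
      show 2 * m + 4 = (2 * m + 3) + 1 from rfl, Finset.sum_range_succ',
      E_eq_zero_of_lt (show 0 < m + 1 by omega)]
    omega
  rw [← hG, S1, show 2 * (m + 1) + 1 = 2 * m + 3 from by ring]
  omega

lemma R2 (m : ℕ) : S1 (m + 1) + S1 m = (2 * m + 3) * G1 (m + 1) := by
  have key := Finset.sum_congr rfl (fun k (_ : k ∈ Finset.range (2 * m + 2)) => E_sing m k)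
  rw [Finset.sum_add_distrib, ← Finset.mul_sum] at key
  have hG : G1 (m + 1) = ∑ k ∈ Finset.range (2 * m + 2), E 1 (m + 1) (k + 1) := by
    rw [G1_eq_range (m + 1) (2 * m + 3) (by omega),
      show 2 * m + 3 = (2 * m + 2) + 1 from rfl, Finset.sum_range_succ',
      E_eq_zero_of_lt (show 0 < m + 1 by omega)]
    omega
  rw [← hG] at key
  have hS : S1 (m + 1) = (∑ k ∈ Finset.range (2 * m + 2), (k + 1) * E 1 (m + 1) (k + 1))
      + G1 (m + 1) := by
    rw [S1, show 2 * (m + 1) + 1 = (2 * m + 2) + 1 from rfl, Finset.sum_range_succ',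
      E_eq_zero_of_lt (show 0 < m + 1 by omega), hG]
    rw [← Finset.sum_add_distrib]
    simp only [Nat.mul_zero, Nat.add_zero]
    congr 1
    ext k
    ring
  have hSm : ∑ k ∈ Finset.range (2 * m + 2), (k + 1) * E 1 m k = S1 m := by
    rw [show 2 * m + 2 = (2 * m + 1) + 1 from rfl, Finset.sum_range_succ,
      E_eq_zero_of_gt (show 2 * m < 2 * m + 1 by omega), S1]
    simp
  rw [hSm] at key
  zify at key hS ⊢
  linear_combination hS - key

lemma R3 (m : ℕ) : S1 (m + 2) = G1 (m + 1) + (2 * m + 4) * G1 (m + 2) := by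
  have h2 := R2 (m + 1)
  have h1 := R1 m
  zify at h1 h2 ⊢
  linear_combination h2 + h1

theorem stmt_10 (n : ℕ) (hn : 3 ≤ n) :
    G1 n = G1 (n - 2) + G1 (n - 1) + 2 * (n - 1) * G1 (n - 1) := by
  obtain ⟨m, rfl⟩ : ∃ m, n = m + 3 := ⟨n - 3, by omega⟩
  have h1 := R1 (m + 1)
  have h3 := R3 m
  have e1 : m + 3 - 2 = m + 1 := by omega
  have e2 : m + 3 - 1 = m + 2 := by omega
  rw [e1, e2]
  zify at h1 h3 ⊢
  linear_combination h1 + h3
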